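/- Let a < 0, b ∈ ℝᵐ with b ≠ 0, Γ positive definite symmetric, p > 0, c < 0. Then the minimizer of ½‖u‖²_Γ + ½p·ω² over (u, ω) ∈ ℝᵐ × ℝ≥0 subject to a + bᵀΓu + p·c·ω ≥ 0 is u* = (-a/‖b‖²_Γ)·b, ω* = 0, where ‖b‖²_Γ = bᵀΓb. -/

import Mathlib

open Matrix

private lemma gsym {m : ℕ} (Γ : Matrix (Fin m) (Fin m) ℝ) (hΓ : Γ.PosDef)
    (u b : Fin m → ℝ) : u ⬝ᵥ Γ *ᵥ b = b ⬝ᵥ Γ *ᵥ u := by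
  rw [Matrix.dotProduct_mulVec, ← Matrix.mulVec_transpose]
  nth_rewrite 2 [show Γ = Γᵀ from by
    simpa [Matrix.conjTranspose_eq_transpose_of_trivial] using hΓ.1.eq.symm]
  exact dotProduct_comm _ _

/-- Case 4 of the KKT analysis of the OD-CBF-QP: `c < 0`, the decay variable
saturates at `0` and the controller is the standard half-space projection. -/
theorem stmt13 {m : ℕ} (a : ℝ) (ha : a < 0) (b : Fin m → ℝ) (hb : b ≠ 0)
    (Γ : Matrix (Fin m) (Fin m) ℝ) (hΓ : Γ.PosDef)
    (p c : ℝ) (hp : 0 < p) (hc : c < 0) :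
    (0 ≤ a + b ⬝ᵥ Γ *ᵥ ((-a / (b ⬝ᵥ Γ *ᵥ b)) • b) + p * c * 0) ∧
      ∀ u : Fin m → ℝ, ∀ ω : ℝ, 0 ≤ ω → 0 ≤ a + b ⬝ᵥ Γ *ᵥ u + p * c * ω →
        (1 / 2) * (((-a / (b ⬝ᵥ Γ *ᵥ b)) • b) ⬝ᵥ Γ *ᵥ ((-a / (b ⬝ᵥ Γ *ᵥ b)) • b)) +
            (1 / 2) * p * (0 : ℝ) ^ 2 ≤
          (1 / 2) * (u ⬝ᵥ Γ *ᵥ u) + (1 / 2) * p * ω ^ 2 := by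
  set B := b ⬝ᵥ Γ *ᵥ b with hBdef
  have hB : 0 < B := by simpa using hΓ.dotProduct_mulVec_pos hb
  set s : ℝ := -a / B with hs
  have hval : ∀ v : Fin m → ℝ, ∀ t : ℝ, v ⬝ᵥ Γ *ᵥ (t • b) = t * (v ⬝ᵥ Γ *ᵥ b) := by
    intro v t; rw [Matrix.mulVec_smul, dotProduct_smul, smul_eq_mul]
  have hfeas : b ⬝ᵥ Γ *ᵥ (s • b) = -a := by
    rw [hval, hs, ← hBdef]; field_simp
  constructor
  · rw [hfeas]; norm_num
  · intro u ω hω hcon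
    have hself : (s • b) ⬝ᵥ Γ *ᵥ (s • b) = a ^ 2 / B := by
      rw [hval, smul_dotProduct, smul_eq_mul, ← hBdef, hs]
      field_simp
    set r : ℝ := b ⬝ᵥ Γ *ᵥ u with hr
    have hr' : u ⬝ᵥ Γ *ᵥ b = r := gsym Γ hΓ u b
    have hra : -a ≤ r := by nlinarith [mul_nonneg (mul_nonneg hp.le (neg_nonneg.2 hc.le)) hω]
    -- Cauchy-Schwarz via positive semidefiniteness
    have hcs : 0 ≤ (u - (r / B) • b) ⬝ᵥ Γ *ᵥ (u - (r / B) • b) := by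
      rcases eq_or_ne (u - (r / B) • b) 0 with h | h
      · rw [h]; simp
      · have := hΓ.dotProduct_mulVec_pos h; exact (by simpa using this : (0:ℝ) < _).le
    have hexp : (u - (r / B) • b) ⬝ᵥ Γ *ᵥ (u - (r / B) • b)
        = u ⬝ᵥ Γ *ᵥ u - r ^ 2 / B := by
      rw [Matrix.mulVec_sub, dotProduct_sub, sub_dotProduct,
        sub_dotProduct, hval, smul_dotProduct, smul_eq_mul,
        smul_dotProduct, smul_eq_mul, Matrix.dotProduct_mulVec,
        ← Matrix.dotProduct_mulVec, hr', ← hr, hval, ← hBdef]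
      field_simp; ring
    have hU : a ^ 2 / B ≤ u ⬝ᵥ Γ *ᵥ u := by
      have h1 : r ^ 2 / B ≤ u ⬝ᵥ Γ *ᵥ u := by nlinarith [hcs, hexp]
      have h2 : a ^ 2 ≤ r ^ 2 := by nlinarith
      calc a ^ 2 / B ≤ r ^ 2 / B := by gcongr
        _ ≤ _ := h1
    rw [hself]
    nlinarith [sq_nonneg ω]
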